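/- (Purity lemma) Let N ≥ 1, let q ∈ ℂ and k ∈ ℝ, and let T be an N×N complex Hermitian matrix with T_{N−1,N−1} = 1 satisfying J₊·T = (conj q)·T − k·(J₋·T). Then for all indices a, b one has T_{a,b} = conj(T_{N−1,a}) · T_{N−1,b}; in particular T is a rank-one (pure-state) projection onto the vector with components T_{N−1,b}. -/

import Mathlib

open Matrix

/-- Ladder coefficients c_a = √((N−1−a)(a+1)), so that c_{N−1} = 0. -/
noncomputable def spinC (N a : ℕ) : ℝ :=
  Real.sqrt (((N : ℝ) - 1 - a) * (a + 1))

/-- Raising operator J₊: (J₊)_{a+1,a} = c_a, all other entries 0. -/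
noncomputable def Jp (N : ℕ) : Matrix (Fin N) (Fin N) ℂ :=
  Matrix.of fun a b => if (a : ℕ) = (b : ℕ) + 1 then ((spinC N b : ℝ) : ℂ) else 0

/-- Lowering operator J₋ = J₊ᵀ. -/
noncomputable def Jm (N : ℕ) : Matrix (Fin N) (Fin N) ℂ := (Jp N)ᵀ

/-- J_z = diag(a − (N−1)/2). -/
noncomputable def Jz (N : ℕ) : Matrix (Fin N) (Fin N) ℂ :=
  Matrix.diagonal fun a => ((a : ℂ) - ((N : ℂ) - 1) / 2)

/-- J_x = (J₊ + J₋)/2. -/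
noncomputable def Jx (N : ℕ) : Matrix (Fin N) (Fin N) ℂ :=
  (1 / 2 : ℂ) • (Jp N + Jm N)

/-- J_y = (J₊ − J₋)/(2i). -/
noncomputable def Jy (N : ℕ) : Matrix (Fin N) (Fin N) ℂ :=
  (1 / (2 * Complex.I)) • (Jp N - Jm N)

/-- Purity lemma: a Hermitian solution of J₊T = q̄T − k J₋T with T_{N−1,N−1} = 1
has rank one: T_{a,b} = conj(T_{N−1,a})·T_{N−1,b}. -/

lemma spinC_pos (N a : ℕ) (h : a + 1 < N) : 0 < spinC N a := by
  apply Real.sqrt_pos.2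
  apply mul_pos
  · have : (a : ℝ) + 1 < N := by exact_mod_cast h
    linarith
  · positivity

lemma spinC_top (N : ℕ) (hN : 1 ≤ N) : spinC N (N - 1) = 0 := by
  unfold spinC
  have h : ((N - 1 : ℕ) : ℝ) = (N : ℝ) - 1 := by
    rw [Nat.cast_sub hN]; simp
  rw [h]
  rw [show (N:ℝ) - 1 - ((N:ℝ) - 1) = 0 by ring, zero_mul, Real.sqrt_zero]

lemma jp_mul_apply (N : ℕ) (T : Matrix (Fin N) (Fin N) ℂ) (v : ℕ) (hv : v < N)
    (hv1 : 1 ≤ v) (b : Fin N) :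
    (Jp N * T) ⟨v, hv⟩ b = ((spinC N (v - 1) : ℝ) : ℂ) * T ⟨v - 1, by omega⟩ b := by
  rw [Matrix.mul_apply]
  rw [Finset.sum_eq_single (⟨v - 1, by omega⟩ : Fin N)]
  · simp only [Jp, Matrix.of_apply]
    rw [if_pos (by first | omega | (simp only [Fin.val_mk]; omega))]
  · intro j _ hj
    simp only [Jp, Matrix.of_apply, Fin.val_mk]
    rw [if_neg, zero_mul]
    intro hc
    exact hj (Fin.ext (by first | omega | (simp only [Fin.val_mk]; omega)))
  · intro h; exact absurd (Finset.mem_univ _) h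

lemma jm_mul_apply (N : ℕ) (T : Matrix (Fin N) (Fin N) ℂ) (v : ℕ) (hv : v < N)
    (hv2 : v + 1 < N) (b : Fin N) :
    (Jm N * T) ⟨v, hv⟩ b = ((spinC N v : ℝ) : ℂ) * T ⟨v + 1, hv2⟩ b := by
  rw [Matrix.mul_apply]
  rw [Finset.sum_eq_single (⟨v + 1, hv2⟩ : Fin N)]
  · simp only [Jm, Jp, Matrix.transpose_apply, Matrix.of_apply, Fin.val_mk]
    simp
  · intro j _ hj
    simp only [Jm, Jp, Matrix.transpose_apply, Matrix.of_apply, Fin.val_mk]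
    rw [if_neg, zero_mul]
    intro hc
    exact hj (Fin.ext (by first | omega | (simp only [Fin.val_mk]; omega)))
  · intro h; exact absurd (Finset.mem_univ _) h

lemma jm_mul_apply_top (N : ℕ) (hN : 1 ≤ N) (T : Matrix (Fin N) (Fin N) ℂ) (b : Fin N) :
    (Jm N * T) ⟨N - 1, Nat.sub_lt hN Nat.one_pos⟩ b = 0 := by
  rw [Matrix.mul_apply]
  apply Finset.sum_eq_zero
  intro j _
  simp only [Jm, Jp, Matrix.transpose_apply, Matrix.of_apply, Fin.val_mk]
  rw [if_neg (by omega), zero_mul]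

/-- Unified J₋ row formula: for r = N-1-m', (J₋T)_{r,b} = c_r · T_{N-1-(m'-1), b},
valid also for m' = 0 since c_{N-1} = 0. -/
lemma jm_row (N : ℕ) (hN : 1 ≤ N) (T : Matrix (Fin N) (Fin N) ℂ) (m' : ℕ)
    (hm : m' + 1 ≤ N - 1) (b : Fin N) :
    (Jm N * T) ⟨N - 1 - m', by omega⟩ b
      = ((spinC N (N - 1 - m') : ℝ) : ℂ) * T ⟨N - 1 - (m' - 1), by omega⟩ b := by
  match m' with
  | 0 =>
    rw [show (⟨N - 1 - 0, by omega⟩ : Fin N) = ⟨N - 1, by omega⟩ from Fin.ext (by simp)]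
    rw [jm_mul_apply_top N hN T b]
    rw [show N - 1 - 0 = N - 1 from by omega, spinC_top N hN]
    simp
  | (n + 1) =>
    rw [jm_mul_apply N T (N - 1 - (n + 1)) (by omega) (by omega) b]
    rw [show (⟨N - 1 - (n + 1) + 1, by omega⟩ : Fin N) = (⟨N - 1 - (n + 1 - 1), by omega⟩ : Fin N)
      by apply Fin.ext; first | omega | (simp only [Fin.val_mk]; omega)]

/-- Induction step. -/
lemma purity_step (N : ℕ) (hN : 1 ≤ N) (q : ℂ) (k : ℝ)
    (T : Matrix (Fin N) (Fin N) ℂ)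
    (heq : Jp N * T = (starRingEnd ℂ q) • T - (k : ℂ) • (Jm N * T))
    (m' : ℕ) (hm : m' + 1 ≤ N - 1) (l₁ l₂ : ℂ)
    (h₁ : ∀ b, T ⟨N - 1 - m', by omega⟩ b = l₁ * T ⟨N - 1, by omega⟩ b)
    (h₂ : ∀ b, T ⟨N - 1 - (m' - 1), by omega⟩ b = l₂ * T ⟨N - 1, by omega⟩ b) :
    ∃ l : ℂ, ∀ b, T ⟨N - 1 - (m' + 1), by omega⟩ b = l * T ⟨N - 1, by omega⟩ b := by
  set c1 : ℂ := ((spinC N (N - 1 - m' - 1) : ℝ) : ℂ) with hc1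
  set c2 : ℂ := ((spinC N (N - 1 - m') : ℝ) : ℂ) with hc2
  have hc1ne : c1 ≠ 0 := by
    rw [hc1]
    exact Complex.ofReal_ne_zero.2 (ne_of_gt (spinC_pos _ _ (by omega)))
  refine ⟨(starRingEnd ℂ q * l₁ - (k : ℂ) * c2 * l₂) / c1, fun b => ?_⟩
  have key : c1 * T ⟨N - 1 - (m' + 1), by omega⟩ b
      = starRingEnd ℂ q * T ⟨N - 1 - m', by omega⟩ b
        - (k : ℂ) * (c2 * T ⟨N - 1 - (m' - 1), by omega⟩ b) := by
    have hjp := jp_mul_apply N T (N - 1 - m') (by omega) (by omega) b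
    rw [heq] at hjp
    simp only [Matrix.sub_apply, Matrix.smul_apply, smul_eq_mul] at hjp
    rw [jm_row N hN T m' hm b] at hjp
    exact hjp.symm
  rw [h₁ b, h₂ b] at key
  rw [div_mul_eq_mul_div, eq_div_iff hc1ne]
  linear_combination key

theorem purity_lemma (N : ℕ) (hN : 1 ≤ N) (q : ℂ) (k : ℝ)
    (T : Matrix (Fin N) (Fin N) ℂ) (hT : T.IsHermitian)
    (hT1 : T ⟨N - 1, by omega⟩ ⟨N - 1, by omega⟩ = 1)
    (heq : Jp N * T = (starRingEnd ℂ q) • T - (k : ℂ) • (Jm N * T)) :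
    ∀ a b : Fin N,
      T a b = starRingEnd ℂ (T ⟨N - 1, by omega⟩ a) * T ⟨N - 1, by omega⟩ b := by
  have key : ∀ m, m ≤ N - 1 →
      ∃ l : ℂ, ∀ b, T ⟨N - 1 - m, by omega⟩ b = l * T ⟨N - 1, by omega⟩ b := by
    intro m
    induction m using Nat.strong_induction_on with
    | _ m IH =>
      intro hm
      match m with
      | 0 =>
        refine ⟨1, fun b => ?_⟩
        rw [one_mul]
        rfl
      | (m' + 1) =>
        obtain ⟨l₁, h₁⟩ := IH m' (by omega) (by omega)
        obtain ⟨l₂, h₂⟩ := IH (m' - 1) (by omega) (by omega)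
        exact purity_step N hN q k T heq m' hm l₁ l₂ h₁ h₂
  intro a b
  have haN : (a : ℕ) < N := a.isLt
  obtain ⟨l, hl⟩ := key (N - 1 - (a : ℕ)) (by omega)
  have ha : (⟨N - 1 - (N - 1 - (a : ℕ)), by omega⟩ : Fin N) = a :=
    Fin.ext (by first | omega | (simp only [Fin.val_mk]; omega))
  rw [ha] at hl
  have hla : T a ⟨N - 1, by omega⟩ = l := by
    have h0 := hl ⟨N - 1, by omega⟩
    rw [hT1, mul_one] at h0
    exact h0
  have h2 : starRingEnd ℂ (T ⟨N - 1, by omega⟩ a) = l := by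
    rw [← hT.apply ⟨N - 1, by omega⟩ a]
    simpa using hla
  rw [hl b, h2]
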